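/- One has ∫_{4/21}^{2/7} ∫_{2/7 − u/2}^{min(u, 3/7 − u)} (1/(u·v²)) dv du + ∫_{2/7}^{3/7} ∫_{4/7 − u}^{min(u, (1−u)/2)} (1/(u·v²)) dv du = 19/6·log 2 − 1/4·log 3 − 13/12. -/

import Mathlib

open MeasureTheory intervalIntegral

/-- FTC evaluation of the inner integral `∫ 1/(u v²) dv`. -/
lemma sieve_inner_eval {u a b : ℝ} (hu : 0 < u) (ha : 0 < a) (hb : 0 < b) :
    ∫ v in a..b, 1 / (u * v ^ 2) = 1 / (u * a) - 1 / (u * b) := by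
  have hne : ∀ v ∈ Set.uIcc a b, v ≠ 0 := by
    intro v hv
    rcases Set.mem_uIcc.mp hv with ⟨h1, _⟩ | ⟨h1, _⟩ <;>
      exact ne_of_gt (by linarith)
  have hder : ∀ v ∈ Set.uIcc a b, HasDerivAt (fun v => -(u * v)⁻¹) (1 / (u * v ^ 2)) v := by
    intro v hv
    have h1 : HasDerivAt (fun v : ℝ => u * v) u v := by
      simpa using (hasDerivAt_id v).const_mul u
    have h2 := (h1.inv (mul_ne_zero hu.ne' (hne v hv))).neg
    simp only [Pi.neg_def, Pi.inv_def] at h2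
    refine h2.congr_deriv ?_
    have hv0 := hne v hv
    field_simp
  have hint : IntervalIntegrable (fun v => 1 / (u * v ^ 2)) volume a b := by
    apply ContinuousOn.intervalIntegrable
    apply ContinuousOn.div continuousOn_const
      ((continuous_const.mul (continuous_pow 2)).continuousOn)
    intro v hv
    exact mul_ne_zero hu.ne' (pow_ne_zero 2 (hne v hv))
  rw [integral_eq_sub_of_hasDerivAt hder hint]
  have ha' : a ≠ 0 := ha.ne'
  have hb' : b ≠ 0 := hb.ne'
  field_simp
  ring

lemma sieve_piece1a :
    ∫ u in (4/21 : ℝ)..(3/14), (1 / (u * (2/7 - u/2)) - 1 / (u * min u (3/7 - u)))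
      = 7/2 * Real.log (3/14) - 7/2 * Real.log (5/28) + 14/3 - 21/4 := by
  have hle : (4/21 : ℝ) ≤ 3/14 := by norm_num
  have heq : Set.EqOn (fun u : ℝ => 1 / (u * (2/7 - u/2)) - 1 / (u * min u (3/7 - u)))
      (fun u : ℝ => 1 / (u * (2/7 - u/2)) - 1 / (u * u)) (Set.uIcc (4/21 : ℝ) (3/14)) := by
    intro u hu
    rw [Set.uIcc_of_le hle] at hu
    obtain ⟨h1, h2⟩ := hu
    have hmin : min u (3/7 - u) = u := min_eq_left (by linarith)
    simp only [hmin]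
  rw [intervalIntegral.integral_congr heq]
  have hder : ∀ u ∈ Set.uIcc (4/21 : ℝ) (3/14),
      HasDerivAt (fun u : ℝ => 7/2 * Real.log u - 7/2 * Real.log (2/7 - u/2) + 1/u)
        (1 / (u * (2/7 - u/2)) - 1 / (u * u)) u := by
    intro u hu
    rw [Set.uIcc_of_le hle] at hu
    obtain ⟨h1, h2⟩ := hu
    have hu0 : (0:ℝ) < u := by linarith
    have hc : (0:ℝ) < 2/7 - u/2 := by linarith
    have d1 : HasDerivAt Real.log u⁻¹ u := Real.hasDerivAt_log hu0.ne'
    have d2 : HasDerivAt (fun u : ℝ => 2/7 - u/2) (-(1/2)) u := by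
      simpa using ((hasDerivAt_id' u).div_const 2).const_sub ((2:ℝ)/7)
    have d3 := d2.log hc.ne'
    have d4 : HasDerivAt (fun u : ℝ => 1/u) (-(u^2)⁻¹) u := by
      simpa [one_div] using hasDerivAt_inv hu0.ne'
    have dd := ((d1.const_mul ((7:ℝ)/2)).sub (d3.const_mul ((7:ℝ)/2))).add d4
    simp only [Pi.sub_def, Pi.add_def] at dd
    refine dd.congr_deriv ?_
    have h47 : (4:ℝ) - 7 * u ≠ 0 := ne_of_gt (by linarith)
    have h47' : (2*2:ℝ) - 7 * u ≠ 0 := ne_of_gt (by linarith)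
    have h47'' : (4:ℝ) - u * 7 ≠ 0 := ne_of_gt (by linarith)
    have hc' := hc.ne'
    rw [show (2:ℝ)/7 - u/2 = (4 - 7*u)/14 by ring]
    field_simp
    ring
  have hint : IntervalIntegrable (fun u : ℝ => 1 / (u * (2/7 - u/2)) - 1 / (u * u))
      volume (4/21) (3/14) := by
    apply ContinuousOn.intervalIntegrable
    apply ContinuousOn.sub
    · apply ContinuousOn.div continuousOn_const
        ((continuous_id.mul (continuous_const.sub (continuous_id.div_const 2))).continuousOn)
      intro u hu
      rw [Set.uIcc_of_le hle] at hu
      have hu0 : (0:ℝ) < u := by linarith [hu.1]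
      have hc : (0:ℝ) < 2/7 - u/2 := by
        have := hu.2; linarith
      exact mul_ne_zero hu0.ne' hc.ne'
    · apply ContinuousOn.div continuousOn_const
        ((continuous_id.mul continuous_id).continuousOn)
      intro u hu
      rw [Set.uIcc_of_le hle] at hu
      have hu0 : (0:ℝ) < u := by linarith [hu.1]
      exact mul_ne_zero hu0.ne' hu0.ne'
  rw [integral_eq_sub_of_hasDerivAt hder hint]
  norm_num

lemma sieve_piece1b :
    ∫ u in (3/14 : ℝ)..(2/7), (1 / (u * (2/7 - u/2)) - 1 / (u * min u (3/7 - u)))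
      = 7/2 * Real.log (2/7) - 7/2 * Real.log (1/7) - 7/3 * Real.log (2/7)
        + 7/3 * Real.log (1/7) - 7/2 * Real.log (3/14) + 7/2 * Real.log (5/28) := by
  have hle : (3/14 : ℝ) ≤ 2/7 := by norm_num
  have heq : Set.EqOn (fun u : ℝ => 1 / (u * (2/7 - u/2)) - 1 / (u * min u (3/7 - u)))
      (fun u : ℝ => 1 / (u * (2/7 - u/2)) - 1 / (u * (3/7 - u))) (Set.uIcc (3/14 : ℝ) (2/7)) := by
    intro u hu
    rw [Set.uIcc_of_le hle] at hu
    obtain ⟨h1, h2⟩ := hu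
    have hmin : min u (3/7 - u) = 3/7 - u := min_eq_right (by linarith)
    simp only [hmin]
  rw [intervalIntegral.integral_congr heq]
  have hder : ∀ u ∈ Set.uIcc (3/14 : ℝ) (2/7),
      HasDerivAt (fun u : ℝ => 7/2 * Real.log u - 7/2 * Real.log (2/7 - u/2)
          - 7/3 * Real.log u + 7/3 * Real.log (3/7 - u))
        (1 / (u * (2/7 - u/2)) - 1 / (u * (3/7 - u))) u := by
    intro u hu
    rw [Set.uIcc_of_le hle] at hu
    obtain ⟨h1, h2⟩ := hu
    have hu0 : (0:ℝ) < u := by linarith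
    have hc : (0:ℝ) < 2/7 - u/2 := by linarith
    have he : (0:ℝ) < 3/7 - u := by linarith
    have d1 : HasDerivAt Real.log u⁻¹ u := Real.hasDerivAt_log hu0.ne'
    have d2 : HasDerivAt (fun u : ℝ => 2/7 - u/2) (-(1/2)) u := by
      simpa using ((hasDerivAt_id' u).div_const 2).const_sub ((2:ℝ)/7)
    have d3 := d2.log hc.ne'
    have d5 : HasDerivAt (fun u : ℝ => 3/7 - u) (-1) u := by
      simpa using (hasDerivAt_id' u).const_sub ((3:ℝ)/7)
    have d6 := d5.log he.ne'
    have dd := (((d1.const_mul ((7:ℝ)/2)).sub (d3.const_mul ((7:ℝ)/2))).sub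
      (d1.const_mul ((7:ℝ)/3))).add (d6.const_mul ((7:ℝ)/3))
    simp only [Pi.sub_def, Pi.add_def] at dd
    refine dd.congr_deriv ?_
    have h47 : (4:ℝ) - 7 * u ≠ 0 := ne_of_gt (by linarith)
    have h47' : (2*2:ℝ) - 7 * u ≠ 0 := ne_of_gt (by linarith)
    have h37 : (3:ℝ) - 7 * u ≠ 0 := ne_of_gt (by linarith)
    have h47'' : (4:ℝ) - u * 7 ≠ 0 := ne_of_gt (by linarith)
    have hc' := hc.ne'
    rw [show (2:ℝ)/7 - u/2 = (4 - 7*u)/14 by ring]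
    field_simp
    ring
  have hint : IntervalIntegrable (fun u : ℝ => 1 / (u * (2/7 - u/2)) - 1 / (u * (3/7 - u)))
      volume (3/14) (2/7) := by
    apply ContinuousOn.intervalIntegrable
    apply ContinuousOn.sub
    · apply ContinuousOn.div continuousOn_const
        ((continuous_id.mul (continuous_const.sub (continuous_id.div_const 2))).continuousOn)
      intro u hu
      rw [Set.uIcc_of_le hle] at hu
      have hu0 : (0:ℝ) < u := by linarith [hu.1]
      have hc : (0:ℝ) < 2/7 - u/2 := by have := hu.2; linarith
      exact mul_ne_zero hu0.ne' hc.ne'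
    · apply ContinuousOn.div continuousOn_const
        ((continuous_id.mul (continuous_const.sub continuous_id)).continuousOn)
      intro u hu
      rw [Set.uIcc_of_le hle] at hu
      have hu0 : (0:ℝ) < u := by linarith [hu.1]
      have he : (0:ℝ) < 3/7 - u := by have := hu.2; linarith
      exact mul_ne_zero hu0.ne' he.ne'
  rw [integral_eq_sub_of_hasDerivAt hder hint]
  norm_num
  ring

lemma sieve_piece2a :
    ∫ u in (2/7 : ℝ)..(1/3), (1 / (u * (4/7 - u)) - 1 / (u * min u ((1 - u)/2)))
      = 7/4 * Real.log (1/3) - 7/4 * Real.log (5/21) + 3 - 7/2 := by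
  have hle : (2/7 : ℝ) ≤ 1/3 := by norm_num
  have heq : Set.EqOn (fun u : ℝ => 1 / (u * (4/7 - u)) - 1 / (u * min u ((1 - u)/2)))
      (fun u : ℝ => 1 / (u * (4/7 - u)) - 1 / (u * u)) (Set.uIcc (2/7 : ℝ) (1/3)) := by
    intro u hu
    rw [Set.uIcc_of_le hle] at hu
    obtain ⟨h1, h2⟩ := hu
    have hmin : min u ((1 - u)/2) = u := min_eq_left (by linarith)
    simp only [hmin]
  rw [intervalIntegral.integral_congr heq]
  have hder : ∀ u ∈ Set.uIcc (2/7 : ℝ) (1/3),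
      HasDerivAt (fun u : ℝ => 7/4 * Real.log u - 7/4 * Real.log (4/7 - u) + 1/u)
        (1 / (u * (4/7 - u)) - 1 / (u * u)) u := by
    intro u hu
    rw [Set.uIcc_of_le hle] at hu
    obtain ⟨h1, h2⟩ := hu
    have hu0 : (0:ℝ) < u := by linarith
    have hc : (0:ℝ) < 4/7 - u := by linarith
    have d1 : HasDerivAt Real.log u⁻¹ u := Real.hasDerivAt_log hu0.ne'
    have d2 : HasDerivAt (fun u : ℝ => 4/7 - u) (-1) u := by
      simpa using (hasDerivAt_id' u).const_sub ((4:ℝ)/7)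
    have d3 := d2.log hc.ne'
    have d4 : HasDerivAt (fun u : ℝ => 1/u) (-(u^2)⁻¹) u := by
      simpa [one_div] using hasDerivAt_inv hu0.ne'
    have dd := ((d1.const_mul ((7:ℝ)/4)).sub (d3.const_mul ((7:ℝ)/4))).add d4
    simp only [Pi.sub_def, Pi.add_def] at dd
    refine dd.congr_deriv ?_
    have h47 : (4:ℝ) - 7 * u ≠ 0 := ne_of_gt (by linarith)
    have h47' : (2*2:ℝ) - 7 * u ≠ 0 := ne_of_gt (by linarith)
    field_simp
    ring
  have hint : IntervalIntegrable (fun u : ℝ => 1 / (u * (4/7 - u)) - 1 / (u * u))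
      volume (2/7) (1/3) := by
    apply ContinuousOn.intervalIntegrable
    apply ContinuousOn.sub
    · apply ContinuousOn.div continuousOn_const
        ((continuous_id.mul (continuous_const.sub continuous_id)).continuousOn)
      intro u hu
      rw [Set.uIcc_of_le hle] at hu
      have hu0 : (0:ℝ) < u := by linarith [hu.1]
      have hc : (0:ℝ) < 4/7 - u := by have := hu.2; linarith
      exact mul_ne_zero hu0.ne' hc.ne'
    · apply ContinuousOn.div continuousOn_const
        ((continuous_id.mul continuous_id).continuousOn)
      intro u hu
      rw [Set.uIcc_of_le hle] at hu
      have hu0 : (0:ℝ) < u := by linarith [hu.1]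
      exact mul_ne_zero hu0.ne' hu0.ne'
  rw [integral_eq_sub_of_hasDerivAt hder hint]
  norm_num

lemma sieve_piece2b :
    ∫ u in (1/3 : ℝ)..(3/7), (1 / (u * (4/7 - u)) - 1 / (u * min u ((1 - u)/2)))
      = 7/4 * Real.log (3/7) - 7/4 * Real.log (1/7) - 2 * Real.log (3/7) + 2 * Real.log (4/7)
        - 7/4 * Real.log (1/3) + 7/4 * Real.log (5/21) + 2 * Real.log (1/3)
        - 2 * Real.log (2/3) := by
  have hle : (1/3 : ℝ) ≤ 3/7 := by norm_num
  have heq : Set.EqOn (fun u : ℝ => 1 / (u * (4/7 - u)) - 1 / (u * min u ((1 - u)/2)))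
      (fun u : ℝ => 1 / (u * (4/7 - u)) - 1 / (u * ((1 - u)/2))) (Set.uIcc (1/3 : ℝ) (3/7)) := by
    intro u hu
    rw [Set.uIcc_of_le hle] at hu
    obtain ⟨h1, h2⟩ := hu
    have hmin : min u ((1 - u)/2) = (1 - u)/2 := min_eq_right (by linarith)
    simp only [hmin]
  rw [intervalIntegral.integral_congr heq]
  have hder : ∀ u ∈ Set.uIcc (1/3 : ℝ) (3/7),
      HasDerivAt (fun u : ℝ => 7/4 * Real.log u - 7/4 * Real.log (4/7 - u)
          - 2 * Real.log u + 2 * Real.log (1 - u))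
        (1 / (u * (4/7 - u)) - 1 / (u * ((1 - u)/2))) u := by
    intro u hu
    rw [Set.uIcc_of_le hle] at hu
    obtain ⟨h1, h2⟩ := hu
    have hu0 : (0:ℝ) < u := by linarith
    have hc : (0:ℝ) < 4/7 - u := by linarith
    have he : (0:ℝ) < 1 - u := by linarith
    have d1 : HasDerivAt Real.log u⁻¹ u := Real.hasDerivAt_log hu0.ne'
    have d2 : HasDerivAt (fun u : ℝ => 4/7 - u) (-1) u := by
      simpa using (hasDerivAt_id' u).const_sub ((4:ℝ)/7)
    have d3 := d2.log hc.ne'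
    have d5 : HasDerivAt (fun u : ℝ => 1 - u) (-1) u := by
      simpa using (hasDerivAt_id' u).const_sub (1:ℝ)
    have d6 := d5.log he.ne'
    have dd := (((d1.const_mul ((7:ℝ)/4)).sub (d3.const_mul ((7:ℝ)/4))).sub
      (d1.const_mul (2:ℝ))).add (d6.const_mul (2:ℝ))
    simp only [Pi.sub_def, Pi.add_def] at dd
    refine dd.congr_deriv ?_
    have h47 : (4:ℝ) - 7 * u ≠ 0 := ne_of_gt (by linarith)
    have h47' : (2*2:ℝ) - 7 * u ≠ 0 := ne_of_gt (by linarith)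
    have h1u : (1:ℝ) - u ≠ 0 := ne_of_gt (by linarith)
    field_simp
    ring
  have hint : IntervalIntegrable (fun u : ℝ => 1 / (u * (4/7 - u)) - 1 / (u * ((1 - u)/2)))
      volume (1/3) (3/7) := by
    apply ContinuousOn.intervalIntegrable
    apply ContinuousOn.sub
    · apply ContinuousOn.div continuousOn_const
        ((continuous_id.mul (continuous_const.sub continuous_id)).continuousOn)
      intro u hu
      rw [Set.uIcc_of_le hle] at hu
      have hu0 : (0:ℝ) < u := by linarith [hu.1]
      have hc : (0:ℝ) < 4/7 - u := by have := hu.2; linarith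
      exact mul_ne_zero hu0.ne' hc.ne'
    · apply ContinuousOn.div continuousOn_const
        ((continuous_id.mul ((continuous_const.sub continuous_id).div_const 2)).continuousOn)
      intro u hu
      rw [Set.uIcc_of_le hle] at hu
      have hu0 : (0:ℝ) < u := by linarith [hu.1]
      have he : (0:ℝ) < (1 - u)/2 := by have := hu.2; linarith
      exact mul_ne_zero hu0.ne' he.ne'
  rw [integral_eq_sub_of_hasDerivAt hder hint]
  norm_num
  ring

/-- Evaluation of the double integrals arising in the sieve lower bound. -/
theorem sieve_integral_evaluation :
    (∫ u in (4 / 21 : ℝ)..(2 / 7), ∫ v in (2 / 7 - u / 2)..(min u (3 / 7 - u)),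
        1 / (u * v ^ 2)) +
      (∫ u in (2 / 7 : ℝ)..(3 / 7), ∫ v in (4 / 7 - u)..(min u ((1 - u) / 2)),
        1 / (u * v ^ 2))
      = 19 / 6 * Real.log 2 - 1 / 4 * Real.log 3 - 13 / 12 := by
  -- replace the inner integrals by explicit expressions
  have heq1 : Set.EqOn
      (fun u : ℝ => ∫ v in (2/7 - u/2)..(min u (3/7 - u)), 1 / (u * v ^ 2))
      (fun u : ℝ => 1 / (u * (2/7 - u/2)) - 1 / (u * min u (3/7 - u)))
      (Set.uIcc (4/21 : ℝ) (2/7)) := by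
    intro u hu
    rw [Set.uIcc_of_le (by norm_num : (4/21 : ℝ) ≤ 2/7)] at hu
    obtain ⟨h1, h2⟩ := hu
    exact sieve_inner_eval (by linarith) (by linarith) (lt_min (by linarith) (by linarith))
  have heq2 : Set.EqOn
      (fun u : ℝ => ∫ v in (4/7 - u)..(min u ((1 - u)/2)), 1 / (u * v ^ 2))
      (fun u : ℝ => 1 / (u * (4/7 - u)) - 1 / (u * min u ((1 - u)/2)))
      (Set.uIcc (2/7 : ℝ) (3/7)) := by
    intro u hu
    rw [Set.uIcc_of_le (by norm_num : (2/7 : ℝ) ≤ 3/7)] at hu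
    obtain ⟨h1, h2⟩ := hu
    exact sieve_inner_eval (by linarith) (by linarith) (lt_min (by linarith) (by linarith))
  rw [intervalIntegral.integral_congr heq1, intervalIntegral.integral_congr heq2]
  -- split the two outer integrals at the points where the min changes branch
  have hcont1 : ContinuousOn
      (fun u : ℝ => 1 / (u * (2/7 - u/2)) - 1 / (u * min u (3/7 - u)))
      (Set.Icc (4/21 : ℝ) (2/7)) := by
    apply ContinuousOn.sub
    · apply ContinuousOn.div continuousOn_const
        ((continuous_id.mul (continuous_const.sub (continuous_id.div_const 2))).continuousOn)
      intro u hu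
      have hu0 : (0:ℝ) < u := by linarith [hu.1]
      have hc : (0:ℝ) < 2/7 - u/2 := by have := hu.2; linarith
      exact mul_ne_zero hu0.ne' hc.ne'
    · apply ContinuousOn.div continuousOn_const
        ((continuous_id.mul (continuous_id.min (continuous_const.sub continuous_id))).continuousOn)
      intro u hu
      have hu0 : (0:ℝ) < u := by linarith [hu.1]
      have hm : (0:ℝ) < min u (3/7 - u) := lt_min hu0 (by have := hu.2; linarith)
      exact mul_ne_zero hu0.ne' hm.ne'
  have hcont2 : ContinuousOn
      (fun u : ℝ => 1 / (u * (4/7 - u)) - 1 / (u * min u ((1 - u)/2)))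
      (Set.Icc (2/7 : ℝ) (3/7)) := by
    apply ContinuousOn.sub
    · apply ContinuousOn.div continuousOn_const
        ((continuous_id.mul (continuous_const.sub continuous_id)).continuousOn)
      intro u hu
      have hu0 : (0:ℝ) < u := by linarith [hu.1]
      have hc : (0:ℝ) < 4/7 - u := by have := hu.2; linarith
      exact mul_ne_zero hu0.ne' hc.ne'
    · apply ContinuousOn.div continuousOn_const
        ((continuous_id.mul (continuous_id.min
          ((continuous_const.sub continuous_id).div_const 2))).continuousOn)
      intro u hu
      have hu0 : (0:ℝ) < u := by linarith [hu.1]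
      have hm : (0:ℝ) < min u ((1 - u)/2) := lt_min hu0 (by have := hu.2; linarith)
      exact mul_ne_zero hu0.ne' hm.ne'
  have hI1a : IntervalIntegrable (fun u : ℝ => 1 / (u * (2/7 - u/2)) - 1 / (u * min u (3/7 - u))) volume (4/21) (3/14) := (hcont1.mono (by
    rw [Set.uIcc_of_le (by norm_num : (4/21 : ℝ) ≤ 3/14)]
    exact Set.Icc_subset_Icc (le_refl _) (by norm_num))).intervalIntegrable
  have hI1b : IntervalIntegrable (fun u : ℝ => 1 / (u * (2/7 - u/2)) - 1 / (u * min u (3/7 - u))) volume (3/14) (2/7) := (hcont1.mono (by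
    rw [Set.uIcc_of_le (by norm_num : (3/14 : ℝ) ≤ 2/7)]
    exact Set.Icc_subset_Icc (by norm_num) (le_refl _))).intervalIntegrable
  have hI2a : IntervalIntegrable (fun u : ℝ => 1 / (u * (4/7 - u)) - 1 / (u * min u ((1 - u)/2))) volume (2/7) (1/3) := (hcont2.mono (by
    rw [Set.uIcc_of_le (by norm_num : (2/7 : ℝ) ≤ 1/3)]
    exact Set.Icc_subset_Icc (le_refl _) (by norm_num))).intervalIntegrable
  have hI2b : IntervalIntegrable (fun u : ℝ => 1 / (u * (4/7 - u)) - 1 / (u * min u ((1 - u)/2))) volume (1/3) (3/7) := (hcont2.mono (by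
    rw [Set.uIcc_of_le (by norm_num : (1/3 : ℝ) ≤ 3/7)]
    exact Set.Icc_subset_Icc (by norm_num) (le_refl _))).intervalIntegrable
  rw [← intervalIntegral.integral_add_adjacent_intervals hI1a hI1b,
    ← intervalIntegral.integral_add_adjacent_intervals hI2a hI2b,
    sieve_piece1a, sieve_piece1b, sieve_piece2a, sieve_piece2b]
  -- expand the logarithms of rationals
  have l27 : Real.log ((2:ℝ)/7) = Real.log 2 - Real.log 7 :=
    Real.log_div (by norm_num) (by norm_num)
  have l17 : Real.log ((1:ℝ)/7) = -Real.log 7 := by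
    rw [Real.log_div (by norm_num) (by norm_num), Real.log_one]; ring
  have l13 : Real.log ((1:ℝ)/3) = -Real.log 3 := by
    rw [Real.log_div (by norm_num) (by norm_num), Real.log_one]; ring
  have l37 : Real.log ((3:ℝ)/7) = Real.log 3 - Real.log 7 :=
    Real.log_div (by norm_num) (by norm_num)
  have l47 : Real.log ((4:ℝ)/7) = 2 * Real.log 2 - Real.log 7 := by
    rw [show ((4:ℝ)/7) = 2^2/7 by norm_num, Real.log_div (by norm_num) (by norm_num),
      Real.log_pow]
    push_cast; ring
  have l23 : Real.log ((2:ℝ)/3) = Real.log 2 - Real.log 3 :=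
    Real.log_div (by norm_num) (by norm_num)
  rw [l27, l17, l13, l37, l47, l23]
  ring
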